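/- Let n ≥ 1. Every torus-invariant polynomial p ∈ MvPolynomial (Fin n × Fin n × Fin n) ℂ that is homogeneous of degree n lies in the ℂ-linear span of the maximum 3-dimensional matching monomials ∏ i, X_{(i, σ i, τ i)}, where σ, τ range over permutations of Fin n. -/

import Mathlib

open MvPolynomial

/-- The scaling substitution `S_{a,b,c}`: the `ℂ`-algebra endomorphism of
`MvPolynomial (Fin n × Fin n × Fin n) ℂ` determined by
`X (i,j,k) ↦ (a i * b j * c k) • X (i,j,k)`. -/
noncomputable def scaleSub {n : ℕ} (a b c : Fin n → ℂˣ) :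
    MvPolynomial (Fin n × Fin n × Fin n) ℂ →ₐ[ℂ] MvPolynomial (Fin n × Fin n × Fin n) ℂ :=
  aeval fun v : Fin n × Fin n × Fin n =>
    (((a v.1 : ℂ) * (b v.2.1 : ℂ) * (c v.2.2 : ℂ))) • X v

/-- A polynomial is torus-invariant if it is fixed by all scaling substitutions `S_{a,b,c}`
with `∏ a = ∏ b = ∏ c = 1`; this encodes the natural action of
`ST_n(ℂ) × ST_n(ℂ) × ST_n(ℂ)` on `ℂ^n ⊗ ℂ^n ⊗ ℂ^n`. -/
def TorusInvariant {n : ℕ} (p : MvPolynomial (Fin n × Fin n × Fin n) ℂ) : Prop :=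
  ∀ a b c : Fin n → ℂˣ,
    (∏ i, a i) = 1 → (∏ j, b j) = 1 → (∏ k, c k) = 1 → scaleSub a b c p = p

lemma scaleSub_monomial {n : ℕ} (a b c : Fin n → ℂˣ)
    (d : Fin n × Fin n × Fin n →₀ ℕ) (r : ℂ) :
    scaleSub a b c (monomial d r) =
      monomial d (r * ∏ v ∈ d.support,
        ((a v.1 : ℂ) * (b v.2.1 : ℂ) * (c v.2.2 : ℂ)) ^ d v) := by
  classical
  rw [scaleSub, aeval_monomial, monomial_eq, Finsupp.prod, Finsupp.prod]
  simp only [smul_pow, smul_eq_C_mul, mul_pow, map_mul, map_prod, map_pow,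
    Finset.prod_mul_distrib, algebraMap_eq]
  ring

lemma coeff_scaleSub {n : ℕ} (a b c : Fin n → ℂˣ)
    (p : MvPolynomial (Fin n × Fin n × Fin n) ℂ) (d : Fin n × Fin n × Fin n →₀ ℕ) :
    coeff d (scaleSub a b c p) =
      (∏ v ∈ d.support, ((a v.1 : ℂ) * (b v.2.1 : ℂ) * (c v.2.2 : ℂ)) ^ d v) * coeff d p := by
  classical
  conv_lhs => rw [p.as_sum]
  rw [map_sum]
  simp only [scaleSub_monomial]
  rw [coeff_sum]
  simp only [coeff_monomial]
  rw [Finset.sum_ite_eq' p.support d (fun d' => coeff d' p * ∏ v ∈ d'.support,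
    ((a v.1 : ℂ) * (b v.2.1 : ℂ) * (c v.2.2 : ℂ)) ^ d' v)]
  by_cases hd : d ∈ p.support
  · rw [if_pos hd]; ring
  · rw [if_neg hd, notMem_support_iff.mp hd, mul_zero]

lemma prod_triple {M : Type*} [CommMonoid M] {n : ℕ} (f : Fin n × Fin n × Fin n → M) :
    ∏ v : Fin n × Fin n × Fin n, f v = ∏ i, ∏ j, ∏ k, f (i, j, k) := by
  rw [Fintype.prod_prod_type]
  exact Finset.prod_congr rfl fun i _ => Fintype.prod_prod_type _

lemma pow_double_sum {M : Type*} [CommMonoid M] {n : ℕ} (g : M) (e : Fin n → Fin n → ℕ) :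
    ∏ j, ∏ k, g ^ e j k = g ^ ∑ j, ∑ k, e j k := by
  rw [← Finset.prod_pow_eq_pow_sum]
  exact Finset.prod_congr rfl fun j _ => Finset.prod_pow_eq_pow_sum _ _ _

lemma weight_split {n : ℕ} (a b c : Fin n → ℂˣ) (d : Fin n × Fin n × Fin n →₀ ℕ) :
    ∏ v ∈ d.support, ((a v.1 : ℂ) * (b v.2.1 : ℂ) * (c v.2.2 : ℂ)) ^ d v =
      (∏ i, (a i : ℂ) ^ (∑ j, ∑ k, d (i, j, k))) *
      (∏ j, (b j : ℂ) ^ (∑ i, ∑ k, d (i, j, k))) *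
      (∏ k, (c k : ℂ) ^ (∑ i, ∑ j, d (i, j, k))) := by
  classical
  have huniv : ∏ v ∈ d.support, ((a v.1 : ℂ) * (b v.2.1 : ℂ) * (c v.2.2 : ℂ)) ^ d v =
      ∏ v : Fin n × Fin n × Fin n, ((a v.1 : ℂ) * (b v.2.1 : ℂ) * (c v.2.2 : ℂ)) ^ d v := by
    apply Finset.prod_subset (Finset.subset_univ _)
    intro v _ hv
    rw [Finsupp.notMem_support_iff.mp hv, pow_zero]
  rw [huniv, prod_triple]
  simp only [mul_pow, Finset.prod_mul_distrib]
  congr 1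
  · congr 1
    · exact Finset.prod_congr rfl fun i _ => pow_double_sum (a i : ℂ) fun j k => d (i, j, k)
    · rw [Finset.prod_comm]
      exact Finset.prod_congr rfl fun j _ => pow_double_sum (b j : ℂ) fun i k => d (i, j, k)
  · have hswap : ∀ i : Fin n, ∏ j, ∏ k, (c k : ℂ) ^ d (i, j, k) =
        ∏ k, ∏ j, (c k : ℂ) ^ d (i, j, k) := fun i => Finset.prod_comm
    rw [Finset.prod_congr rfl fun i _ => hswap i, Finset.prod_comm]
    exact Finset.prod_congr rfl fun k _ => pow_double_sum (c k : ℂ) fun i j => d (i, j, k)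

lemma nat_sum_eq_one {α : Type*} [Fintype α] [DecidableEq α] (f : α → ℕ)
    (h : ∑ a, f a = 1) : ∃ a, f a = 1 ∧ ∀ b, b ≠ a → f b = 0 := by
  obtain ⟨a, -, ha⟩ := Finset.exists_ne_zero_of_sum_ne_zero (h ▸ one_ne_zero)
  rw [← Finset.add_sum_erase _ f (Finset.mem_univ a)] at h
  have h1 : 1 ≤ f a := Nat.one_le_iff_ne_zero.mpr ha
  have hz : ∑ b ∈ Finset.univ.erase a, f b = 0 := by omega
  refine ⟨a, by omega, fun b hb => ?_⟩
  exact (Finset.sum_eq_zero_iff.mp hz) b (Finset.mem_erase.mpr ⟨hb, Finset.mem_univ b⟩)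

lemma exponents_eq_one {n : ℕ} (r : Fin n → ℕ)
    (h : ∀ a : Fin n → ℂˣ, (∏ i, a i) = 1 → ∏ i, (a i : ℂ) ^ r i = 1)
    (hsum : ∑ i, r i = n) : ∀ i, r i = 1 := by
  classical
  have hconst : ∀ i i' : Fin n, r i = r i' := by
    intro i i'
    rcases eq_or_ne i i' with rfl | hne
    · rfl
    · set u : ℂˣ := Units.mk0 (2 : ℂ) two_ne_zero with hu
      set a : Fin n → ℂˣ := Pi.mulSingle i u * Pi.mulSingle i' u⁻¹ with hadef
      have hprod : (∏ j, a j) = 1 := by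
        simp only [hadef, Pi.mul_apply]
        rw [Finset.prod_mul_distrib, Fintype.prod_pi_mulSingle' i u,
          Fintype.prod_pi_mulSingle' i' u⁻¹, mul_inv_cancel]
      have h1 := h a hprod
      have hsingle : ∀ (m : Fin n) (w : ℂˣ), ∏ j, ((Pi.mulSingle (M := fun _ : Fin n => ℂˣ) m w j : ℂˣ) : ℂ) ^ r j
          = (w : ℂ) ^ r m := by
        intro m w
        have hz : ∀ b ∈ Finset.univ, b ≠ m →
            ((Pi.mulSingle (M := fun _ : Fin n => ℂˣ) m w b : ℂˣ) : ℂ) ^ r b = 1 := by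
          intro b _ hb
          rw [Pi.mulSingle_eq_of_ne hb, Units.val_one, one_pow]
        refine (Finset.prod_eq_single m hz (fun hm => absurd (Finset.mem_univ m) hm)).trans ?_
        rw [Pi.mulSingle_eq_same]
      rw [hadef] at h1
      simp only [Pi.mul_apply, Units.val_mul, mul_pow, Finset.prod_mul_distrib, hsingle] at h1
      have huv : ((u⁻¹ : ℂˣ) : ℂ) = (2 : ℂ)⁻¹ := by
        rw [Units.val_inv_eq_inv_val, hu]
        norm_num
      rw [huv, hu] at h1
      have h2 : (2 : ℂ) ^ r i = (2 : ℂ) ^ r i' := by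
        have hne2 : ((2 : ℂ) ^ r i' : ℂ) ≠ 0 := pow_ne_zero _ two_ne_zero
        field_simp at h1
        simpa [Units.val_mk0, mul_inv_eq_one₀ hne2] using h1
      have h3 : ((2 : ℕ) : ℂ) ^ r i = ((2 : ℕ) : ℂ) ^ r i' := by exact_mod_cast h2
      have h4 : (2 : ℕ) ^ r i = (2 : ℕ) ^ r i' := by exact_mod_cast h3
      exact Nat.pow_right_injective le_rfl h4
  intro i
  have hpos : 0 < n := i.pos
  have hs : ∑ j, r j = n * r i := by
    rw [Finset.sum_congr rfl fun j _ => hconst j i, Finset.sum_const, Finset.card_univ,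
      Fintype.card_fin, smul_eq_mul]
  have hni : n * r i = n * 1 := by omega
  exact Nat.eq_of_mul_eq_mul_left hpos hni

lemma prod_monomial_eq {n : ℕ} (s : Finset (Fin n)) (e : Fin n → (Fin n × Fin n × Fin n →₀ ℕ)) :
    (∏ i ∈ s, monomial (e i) (1 : ℂ)) = monomial (∑ i ∈ s, e i) 1 := by
  classical
  induction s using Finset.induction with
  | empty => simp
  | insert _ _ h ih =>
    rw [Finset.prod_insert h, Finset.sum_insert h, ih, monomial_mul, one_mul]

/-- Every torus-invariant polynomial which is homogeneous of degree `n` lies in the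
`ℂ`-linear span of the maximum 3-dimensional matching monomials. -/
theorem invariant_homogeneous_degree_n_in_matching_span (n : ℕ) (hn : 1 ≤ n)
    (p : MvPolynomial (Fin n × Fin n × Fin n) ℂ)
    (hinv : TorusInvariant p) (hhom : p.IsHomogeneous n) :
    p ∈ Submodule.span ℂ
      {q : MvPolynomial (Fin n × Fin n × Fin n) ℂ |
        ∃ σ τ : Equiv.Perm (Fin n), q = ∏ i : Fin n, X (i, σ i, τ i)} := by
  classical
  rw [p.as_sum]
  refine Submodule.sum_mem _ fun d hd => ?_
  have hcoeff : coeff d p ≠ 0 := mem_support_iff.mp hd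
  -- total degree of d is n
  have hdeg : ∑ v : Fin n × Fin n × Fin n, d v = n := by
    have hw := hhom hcoeff
    replace hw : Finsupp.degree d = n := by rw [Finsupp.degree_eq_weight_one]; exact hw
    exact ((Finset.sum_subset (Finset.subset_univ _)
      (fun v _ hv => Finsupp.notMem_support_iff.mp hv)).symm).trans hw
  have sum_triple : ∀ e : Fin n × Fin n × Fin n → ℕ,
      ∑ v : Fin n × Fin n × Fin n, e v = ∑ i, ∑ j, ∑ k, e (i, j, k) := by
    intro e
    rw [Fintype.sum_prod_type]
    exact Finset.sum_congr rfl fun i _ => Fintype.sum_prod_type _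
  have hdeg3 : ∑ i, ∑ j, ∑ k, d (i, j, k) = n := by rw [← sum_triple, hdeg]
  -- the weight of each admissible scaling on d is 1
  have hw1 : ∀ a b c : Fin n → ℂˣ, (∏ i, a i) = 1 → (∏ j, b j) = 1 → (∏ k, c k) = 1 →
      (∏ i, (a i : ℂ) ^ (∑ j, ∑ k, d (i, j, k))) *
      (∏ j, (b j : ℂ) ^ (∑ i, ∑ k, d (i, j, k))) *
      (∏ k, (c k : ℂ) ^ (∑ i, ∑ j, d (i, j, k))) = 1 := by
    intro a b c ha hb hc
    have heq := hinv a b c ha hb hc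
    have hco : coeff d (scaleSub a b c p) = coeff d p := by rw [heq]
    rw [coeff_scaleSub, weight_split] at hco
    exact mul_right_cancel₀ hcoeff (by rw [hco, one_mul])
  have htriv : ∀ (r : Fin n → ℕ), ∏ i, ((1 : ℂˣ) : ℂ) ^ r i = 1 := by
    intro r; simp
  have hA : ∀ i, (∑ j, ∑ k, d (i, j, k)) = 1 := by
    refine exponents_eq_one _ (fun a ha => ?_) hdeg3
    have := hw1 a 1 1 ha (by simp) (by simp)
    simpa [htriv] using this
  have hB : ∀ j, (∑ i, ∑ k, d (i, j, k)) = 1 := by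
    refine exponents_eq_one _ (fun b hb => ?_) ?_
    · have := hw1 1 b 1 (by simp) hb (by simp)
      simpa [htriv] using this
    · calc ∑ j : Fin n, ∑ i : Fin n, ∑ k : Fin n, d (i, j, k)
          = ∑ i : Fin n, ∑ j : Fin n, ∑ k : Fin n, d (i, j, k) := Finset.sum_comm
        _ = n := hdeg3
  have hC : ∀ k, (∑ i, ∑ j, d (i, j, k)) = 1 := by
    refine exponents_eq_one _ (fun c hc => ?_) ?_
    · have := hw1 1 1 c (by simp) (by simp) hc
      simpa [htriv] using this
    · calc ∑ k : Fin n, ∑ i : Fin n, ∑ j : Fin n, d (i, j, k)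
          = ∑ i : Fin n, ∑ k : Fin n, ∑ j : Fin n, d (i, j, k) := Finset.sum_comm
        _ = ∑ i : Fin n, ∑ j : Fin n, ∑ k : Fin n, d (i, j, k) :=
            Finset.sum_congr rfl fun i _ => Finset.sum_comm
        _ = n := hdeg3
  -- extract the matching
  have hrow : ∀ i, ∃ jk : Fin n × Fin n, d (i, jk.1, jk.2) = 1 ∧
      ∀ jk' : Fin n × Fin n, jk' ≠ jk → d (i, jk'.1, jk'.2) = 0 := by
    intro i
    apply nat_sum_eq_one (fun jk : Fin n × Fin n => d (i, jk.1, jk.2))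
    rw [Fintype.sum_prod_type]
    exact hA i
  choose jk hjk1 hjk0 using hrow
  set σ0 : Fin n → Fin n := fun i => (jk i).1 with hσ0
  set τ0 : Fin n → Fin n := fun i => (jk i).2 with hτ0
  have key : ∀ i j k, d (i, j, k) = if (j, k) = jk i then 1 else 0 := by
    intro i j k
    by_cases h : (j, k) = jk i
    · rw [if_pos h]
      have := hjk1 i
      rw [h]; exact this
    · rw [if_neg h]
      exact hjk0 i (j, k) h
  have hσinj : Function.Injective σ0 := by
    intro i1 i2 he
    by_contra hne
    have hpairne : ((i1, τ0 i1) : Fin n × Fin n) ≠ (i2, τ0 i2) := by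
      simp [Prod.ext_iff, hne]
    have h2 : (2 : ℕ) ≤ ∑ ik : Fin n × Fin n, d (ik.1, σ0 i1, ik.2) := by
      have hcalc : ∑ ik ∈ ({(i1, τ0 i1), (i2, τ0 i2)} : Finset (Fin n × Fin n)),
          d (ik.1, σ0 i1, ik.2) = 2 := by
        rw [Finset.sum_pair hpairne]
        show d (i1, σ0 i1, τ0 i1) + d (i2, σ0 i1, τ0 i2) = 2
        have e1 : d (i1, σ0 i1, τ0 i1) = 1 := by rw [key]; simp [hσ0, hτ0]
        have e2 : d (i2, σ0 i1, τ0 i2) = 1 := by rw [he, key]; simp [hσ0, hτ0]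
        omega
      calc (2 : ℕ) = ∑ ik ∈ ({(i1, τ0 i1), (i2, τ0 i2)} : Finset (Fin n × Fin n)),
            d (ik.1, σ0 i1, ik.2) := hcalc.symm
        _ ≤ _ := Finset.sum_le_sum_of_subset (Finset.subset_univ _)
    have hb : ∑ ik : Fin n × Fin n, d (ik.1, σ0 i1, ik.2) = 1 := by
      rw [Fintype.sum_prod_type]; exact hB (σ0 i1)
    omega
  have hτinj : Function.Injective τ0 := by
    intro i1 i2 he
    by_contra hne
    have hpairne : ((i1, σ0 i1) : Fin n × Fin n) ≠ (i2, σ0 i2) := by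
      simp [Prod.ext_iff, hne]
    have h2 : (2 : ℕ) ≤ ∑ ij : Fin n × Fin n, d (ij.1, ij.2, τ0 i1) := by
      have hcalc : ∑ ij ∈ ({(i1, σ0 i1), (i2, σ0 i2)} : Finset (Fin n × Fin n)),
          d (ij.1, ij.2, τ0 i1) = 2 := by
        rw [Finset.sum_pair hpairne]
        show d (i1, σ0 i1, τ0 i1) + d (i2, σ0 i2, τ0 i1) = 2
        have e1 : d (i1, σ0 i1, τ0 i1) = 1 := by rw [key]; simp [hσ0, hτ0]
        have e2 : d (i2, σ0 i2, τ0 i1) = 1 := by rw [he, key]; simp [hσ0, hτ0]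
        omega
      calc (2 : ℕ) = ∑ ij ∈ ({(i1, σ0 i1), (i2, σ0 i2)} : Finset (Fin n × Fin n)),
            d (ij.1, ij.2, τ0 i1) := hcalc.symm
        _ ≤ _ := Finset.sum_le_sum_of_subset (Finset.subset_univ _)
    have hc : ∑ ij : Fin n × Fin n, d (ij.1, ij.2, τ0 i1) = 1 := by
      rw [Fintype.sum_prod_type]; exact hC (τ0 i1)
    omega
  let σ : Equiv.Perm (Fin n) := Equiv.ofBijective σ0 (Finite.injective_iff_bijective.mp hσinj)
  let τ : Equiv.Perm (Fin n) := Equiv.ofBijective τ0 (Finite.injective_iff_bijective.mp hτinj)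
  -- identify d
  have hd_eq : d = ∑ i, Finsupp.single ((i, σ0 i, τ0 i) : Fin n × Fin n × Fin n) (1 : ℕ) := by
    ext v
    obtain ⟨i, j, k⟩ := v
    rw [Finsupp.finset_sum_apply]
    have hterm : ∀ i' : Fin n,
        (Finsupp.single ((i', σ0 i', τ0 i') : Fin n × Fin n × Fin n) (1 : ℕ)) (i, j, k)
          = if i' = i ∧ (j, k) = jk i' then 1 else 0 := by
      intro i'
      rw [Finsupp.single_apply]
      congr 1
      simp only [Prod.ext_iff, hσ0, hτ0, eq_iff_iff]
      constructor
      · rintro ⟨h1, h2, h3⟩; exact ⟨h1, h2.symm, h3.symm⟩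
      · rintro ⟨h1, h2, h3⟩; exact ⟨h1, h2.symm, h3.symm⟩
    rw [Finset.sum_congr rfl fun i' _ => hterm i']
    rw [key i j k]
    rw [Finset.sum_eq_single i]
    · simp
    · intro b _ hb
      rw [if_neg]; tauto
    · intro hi; exact absurd (Finset.mem_univ i) hi
  -- conclude
  have hXprod : (∏ i : Fin n, (X ((i, σ0 i, τ0 i) : Fin n × Fin n × Fin n)
      : MvPolynomial (Fin n × Fin n × Fin n) ℂ)) = monomial d 1 := by
    have hX : ∀ i : Fin n, (X ((i, σ0 i, τ0 i) : Fin n × Fin n × Fin n)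
        : MvPolynomial (Fin n × Fin n × Fin n) ℂ)
        = monomial (Finsupp.single ((i, σ0 i, τ0 i) : Fin n × Fin n × Fin n) 1) 1 := fun i => rfl
    rw [Finset.prod_congr rfl fun i _ => hX i, prod_monomial_eq, ← hd_eq]
  have hmono : (monomial d) (coeff d p) =
      coeff d p • ∏ i : Fin n, (X ((i, σ0 i, τ0 i) : Fin n × Fin n × Fin n)
        : MvPolynomial (Fin n × Fin n × Fin n) ℂ) := by
    rw [hXprod, smul_monomial, smul_eq_mul, mul_one]
  rw [hmono]
  refine Submodule.smul_mem _ _ (Submodule.subset_span ?_)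
  exact ⟨σ, τ, rfl⟩
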